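/- Let P be a hole-free polyomino (a polyomino whose complement in ℤ² has exactly one connected component under 4-adjacency). Partition P into maximal axis-parallel rectangles by extending horizontal cuts through all reflex vertices. Then the adjacency graph of the resulting rectangles (two rectangles adjacent if they share a positive-length horizontal boundary segment) is a tree. -/

import Mathlib

/-- Pixels are points of `ℤ²`. -/
abbrev Pix : Type := ℤ × ℤ

/-- Two pixels are 4-adjacent if they differ by exactly 1 in one coordinate. -/
def Adj4 (p q : Pix) : Prop := (p.1 - q.1).natAbs + (p.2 - q.2).natAbs = 1

/-- A set of pixels is 4-connected if it is nonempty and any two of its pixels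
are joined by a path of 4-adjacent pixels staying inside the set. -/
def Connected4 (S : Set Pix) : Prop :=
  S.Nonempty ∧ ∀ p ∈ S, ∀ q ∈ S,
    Relation.ReflTransGen (fun a b => a ∈ S ∧ b ∈ S ∧ Adj4 a b) p q

/-- The scale-`c` copy of a pixel set: each pixel `(x, y)` is replaced by the
`c × c` block `{(c*x+i, c*y+j) : 0 ≤ i, j < c}`. -/
def scaleP (c : ℤ) (P : Set Pix) : Set Pix :=
  {q | ∃ p ∈ P, ∃ i j : ℤ, 0 ≤ i ∧ i < c ∧ 0 ≤ j ∧ j < c ∧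
    q = (c * p.1 + i, c * p.2 + j)}

/-- A pixel `p ∈ P` is a boundary pixel of `P` if one of its eight
(axis-parallel or diagonal) neighbors is not in `P`. -/
def IsBoundary (P : Set Pix) (p : Pix) : Prop :=
  p ∈ P ∧ ∃ d : Pix, d ≠ (0, 0) ∧ d.1.natAbs ≤ 1 ∧ d.2.natAbs ≤ 1 ∧
    (p.1 + d.1, p.2 + d.2) ∉ P

/-- `IsHRun P y a b`: the pixels `(x, y)` for `a ≤ x ≤ b` form a maximal
horizontal run of `P` in row `y`. -/
def IsHRun (P : Set Pix) (y a b : ℤ) : Prop :=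
  a ≤ b ∧ (∀ x : ℤ, a ≤ x → x ≤ b → (x, y) ∈ P) ∧ (a - 1, y) ∉ P ∧ (b + 1, y) ∉ P

/-- A rectangle `[a,b] × [c,d]` of the horizontal slab decomposition of `P`
(cutting along every horizontal line through a reflex vertex): every row
`c ≤ y ≤ d` has `[a,b]` as a maximal horizontal run, and this is vertically
maximal. -/
structure SlabPiece (P : Set Pix) where
  a : ℤ
  b : ℤ
  c : ℤ
  d : ℤ
  hcd : c ≤ d
  hrows : ∀ y : ℤ, c ≤ y → y ≤ d → IsHRun P y a b
  htop : ¬ IsHRun P (d + 1) a b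
  hbot : ¬ IsHRun P (c - 1) a b

/-- Two slab pieces are adjacent when they share a positive-length horizontal
boundary segment. -/
def SlabAdj {P : Set Pix} (R R' : SlabPiece P) : Prop :=
  (R.d + 1 = R'.c ∨ R'.d + 1 = R.c) ∧ max R.a R'.a ≤ min R.b R'.b


namespace SlabAux


/-- sum of a step-function over consecutive pairs of a list -/
def SSum (f : Pix → Pix → ℤ) : List Pix → ℤ
  | [] => 0
  | [_] => 0
  | a :: b :: l => f a b + SSum f (b :: l)

lemma SSum_nil (f) : SSum f [] = 0 := rfl
lemma SSum_single (f a) : SSum f [a] = 0 := rfl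
lemma SSum_cons (f a b l) : SSum f (a :: b :: l) = f a b + SSum f (b :: l) := rfl

/-- master lemma : pointwise congruence up to a telescoping potential -/
lemma SSum_master (f f' : Pix → Pix → ℤ) (h : Pix → ℤ) :
    ∀ (a : Pix) (l : List Pix),
    (∀ x y, (x, y) ∈ (a :: l).zip l → f x y = f' x y + (h y - h x)) →
    SSum f (a :: l) = SSum f' (a :: l) + (h ((a :: l).getLast (by simp)) - h a) := by
  intro a l
  induction l generalizing a with
  | nil => intro _; simp [SSum_single]
  | cons b l ih =>
    intro hpt
    rw [SSum_cons, SSum_cons, ih b (fun x y hms => hpt x y (by simp at hms ⊢; tauto))]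
    have h1 : f a b = f' a b + (h b - h a) := hpt a b (by simp)
    have : (a :: b :: l).getLast (by simp) = (b :: l).getLast (by simp) := by
      simp [List.getLast_cons]
    rw [this]
    ring_nf
    omega

lemma SSum_congr (f f' : Pix → Pix → ℤ) (a : Pix) (l : List Pix)
    (hpt : ∀ x y, (x, y) ∈ (a :: l).zip l → f x y = f' x y) :
    SSum f (a :: l) = SSum f' (a :: l) := by
  have := SSum_master f f' (fun _ => 0) a l (by intro x y hm; simp [hpt x y hm])
  simpa using this

lemma SSum_add (f f' : Pix → Pix → ℤ) : ∀ (l : List Pix),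
    SSum (fun x y => f x y + f' x y) l = SSum f l + SSum f' l := by
  intro l
  induction l with
  | nil => simp [SSum_nil]
  | cons a l ih =>
    cases l with
    | nil => simp [SSum_single]
    | cons b l => rw [SSum_cons, SSum_cons, SSum_cons, ih]; ring

/-- steps of an append, when glued at a shared point, with tail splice -/
lemma zip_append_tail (l₁ l₂ : List Pix) (h1 : l₁ ≠ []) (h2 : l₂ ≠ [])
    (hg : l₁.getLast h1 = l₂.head h2) :
    SSum f (l₁ ++ l₂.tail) = SSum f l₁ + SSum f l₂ := by
  induction l₁ with
  | nil => simp at h1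
  | cons a l₁ ih =>
    cases l₁ with
    | nil =>
      cases l₂ with
      | nil => simp at h2
      | cons c l₂ =>
        simp at hg; subst hg
        simp [SSum_single]
    | cons b l₁ =>
      have h1' : (b :: l₁) ≠ [] := by simp
      have hg' : (b :: l₁).getLast h1' = l₂.head h2 := by
        rw [← hg]; simp [List.getLast_cons]
      have : (a :: b :: l₁) ++ l₂.tail = a :: ((b :: l₁) ++ l₂.tail) := by simp
      rw [this]
      have hne : (b :: l₁) ++ l₂.tail = b :: (l₁ ++ l₂.tail) := by simp
      rw [hne, SSum_cons, ← hne, ih h1' hg', SSum_cons]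
      ring




/-- straight segment of pixels starting at `p`, step `s`, `n` steps -/
def seg (p s : Pix) : ℕ → List Pix
  | 0 => [p]
  | n + 1 => p :: seg (p.1 + s.1, p.2 + s.2) s n

lemma seg_ne_nil (p s n) : seg p s n ≠ [] := by cases n <;> simp [seg]

lemma seg_head (p s n) : (seg p s n).head (seg_ne_nil p s n) = p := by
  cases n <;> simp [seg]

lemma seg_getLast (p s : Pix) (n : ℕ) :
    (seg p s n).getLast (seg_ne_nil p s n) = (p.1 + n * s.1, p.2 + n * s.2) := by
  induction n generalizing p with
  | zero => simp [seg]
  | succ n ih =>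
    show (p :: seg (p.1 + s.1, p.2 + s.2) s n).getLast (by simp) = _
    rw [List.getLast_cons (seg_ne_nil _ _ _), ih]
    simp; constructor <;> ring

lemma seg_mem (p s : Pix) (n : ℕ) :
    ∀ q ∈ seg p s n, ∃ k : ℕ, k ≤ n ∧ q = (p.1 + k * s.1, p.2 + k * s.2) := by
  induction n generalizing p with
  | zero =>
    intro q hq; simp [seg] at hq; exact ⟨0, by simp [hq]⟩
  | succ n ih =>
    intro q hq
    simp only [seg, List.mem_cons] at hq
    rcases hq with rfl | hq
    · exact ⟨0, by simp⟩
    · obtain ⟨k, hk, hq⟩ := ih _ q hq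
      exact ⟨k + 1, by omega, by rw [hq]; simp; constructor <;> ring⟩

/-- each step of a segment is of the given displacement -/
lemma seg_steps (p s : Pix) (n : ℕ) :
    ∀ x y : Pix, (x, y) ∈ (seg p s n).zip (seg p s n).tail →
      y = (x.1 + s.1, x.2 + s.2) ∧ x ∈ seg p s n := by
  induction n generalizing p with
  | zero => intro x y h; simp [seg] at h
  | succ n ih =>
    intro x y h
    simp only [seg] at h
    rw [List.tail_cons] at h
    have hhd : seg (p.1 + s.1, p.2 + s.2) s n =
        ((seg (p.1 + s.1, p.2 + s.2) s n).head (seg_ne_nil _ _ _)) ::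
        (seg (p.1 + s.1, p.2 + s.2) s n).tail := by
      exact (List.cons_head_tail _).symm
    rw [hhd, List.zip_cons_cons, ← hhd] at h
    simp only [List.mem_cons] at h
    rcases h with h | h
    · rw [seg_head] at h
      injection h with h1 h2
      subst h1; subst h2
      exact ⟨rfl, by simp [seg]⟩
    · obtain ⟨h1, h2⟩ := ih _ x y h
      exact ⟨h1, by simp [seg, h2]⟩

lemma seg_chain (p s : Pix) (hs : Adj4 p (p.1 + s.1, p.2 + s.2)) (n : ℕ) :
    (seg p s n).Chain' Adj4 := by
  have hs' : ∀ q : Pix, Adj4 q (q.1 + s.1, q.2 + s.2) := by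
    intro q; unfold Adj4 at hs ⊢; simp at hs ⊢; omega
  clear hs
  induction n generalizing p with
  | zero => simp [seg, List.Chain', List.isChain_singleton]
  | succ n ih =>
    simp only [seg]
    rw [List.Chain', List.isChain_cons]
    refine ⟨?_, ih _⟩
    intro y hy
    rw [List.head?_eq_head (seg_ne_nil _ _ _)] at hy
    rw [seg_head] at hy
    cases hy
    exact hs' p






/-- signed crossings of the downward ray from the dual point of `q` -/
def crossB (q x y : Pix) : ℤ :=
  (if x.1 ≤ q.1 ∧ q.1 + 1 ≤ y.1 ∧ x.2 ≤ q.2 then 1 else 0)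
  - (if y.1 ≤ q.1 ∧ q.1 + 1 ≤ x.1 ∧ y.2 ≤ q.2 then 1 else 0)

/-- signed crossings of the upward ray -/
def crossU (q x y : Pix) : ℤ :=
  (if x.1 ≤ q.1 ∧ q.1 + 1 ≤ y.1 ∧ q.2 + 1 ≤ x.2 then 1 else 0)
  - (if y.1 ≤ q.1 ∧ q.1 + 1 ≤ x.1 ∧ q.2 + 1 ≤ y.2 then 1 else 0)

/-- signed crossings of the full vertical line -/
def crossF (q x y : Pix) : ℤ :=
  (if x.1 ≤ q.1 ∧ q.1 + 1 ≤ y.1 then 1 else 0)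
  - (if y.1 ≤ q.1 ∧ q.1 + 1 ≤ x.1 then 1 else 0)

lemma cross_split (q x y : Pix) (h : Adj4 x y) :
    crossF q x y = crossB q x y + crossU q x y := by
  unfold crossF crossB crossU; unfold Adj4 at h; split_ifs <;> omega

lemma chain'_of_zip {R : Pix → Pix → Prop} :
    ∀ (l : List Pix), l.Chain' R → ∀ x y, (x, y) ∈ l.zip l.tail → R x y := by
  intro l hl x y hm
  induction l with
  | nil => simp at hm
  | cons a l ih =>
    cases l with
    | nil => simp at hm
    | cons b l =>
      rw [List.tail_cons, List.zip_cons_cons, List.mem_cons] at hm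
      rcases hm with hm | hm
      · injection hm with h1 h2; subst h1; subst h2
        exact (List.isChain_cons_cons.mp hl).1
      · exact ih (List.isChain_cons_cons.mp hl).2 hm

lemma mem_of_zip {l : List Pix} {x y : Pix} (h : (x, y) ∈ l.zip l.tail) :
    x ∈ l ∧ y ∈ l := by
  have := List.of_mem_zip h
  exact ⟨this.1, List.mem_of_mem_tail this.2⟩

/-- crossings of the full vertical line by a closed loop vanish -/
lemma SSum_crossF_closed (q : Pix) (a : Pix) (l : List Pix)
    (hch : (a :: l).Chain' Adj4) (hcl : (a :: l).getLast (by simp) = a) :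
    SSum (crossF q) (a :: l) = 0 := by
  have := SSum_master (crossF q) (fun _ _ => 0)
      (fun p => if q.1 + 1 ≤ p.1 then 1 else 0) a l ?_
  · rw [this, hcl]
    have : SSum (fun _ _ => (0:ℤ)) (a :: l) = 0 := by
      clear this hcl hch
      induction l generalizing a with
      | nil => rfl
      | cons b l ih => show (0:ℤ) + _ = 0; rw [ih b]; ring
    rw [this]; ring
  · intro x y hm
    have hadj := chain'_of_zip _ hch x y hm
    unfold Adj4 at hadj
    unfold crossF; beta_reduce; split_ifs <;> omega

/-- base-point invariance: horizontal move -/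
lemma crossB_move_right (q : Pix) (x y : Pix) (hadj : Adj4 x y)
    (hx : ¬(x.1 = q.1 + 1 ∧ x.2 = q.2)) (hy : ¬(y.1 = q.1 + 1 ∧ y.2 = q.2)) :
    crossB q x y = crossB (q.1 + 1, q.2) x y +
      ((if y.1 = q.1 + 1 ∧ y.2 ≤ q.2 then (1:ℤ) else 0)
        - (if x.1 = q.1 + 1 ∧ x.2 ≤ q.2 then 1 else 0)) := by
  unfold Adj4 at hadj; unfold crossB; split_ifs <;> omega

/-- base-point invariance: vertical move (pointwise equality) -/
lemma crossB_move_up (q : Pix) (x y : Pix) (hadj : Adj4 x y)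
    (hx : ¬(x.1 = q.1 ∧ x.2 = q.2 + 1)) (hy : ¬(y.1 = q.1 ∧ y.2 = q.2 + 1)) :
    crossB (q.1, q.2 + 1) x y = crossB q x y := by
  unfold Adj4 at hadj; unfold crossB; split_ifs <;> omega




/-- moving the base point one step, when both base points avoid the loop. -/
lemma W_move (a : Pix) (l : List Pix)
    (hch : (a :: l).Chain' Adj4) (hcl : (a :: l).getLast (by simp) = a)
    (q q' : Pix) (hadj : Adj4 q q')
    (hq : ∀ p ∈ a :: l, p ≠ q) (hq' : ∀ p ∈ a :: l, p ≠ q') :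
    SSum (crossB q) (a :: l) = SSum (crossB q') (a :: l) := by
  have key : ∀ (r r' : Pix), (r'.1 = r.1 + 1 ∧ r'.2 = r.2) →
      (∀ p ∈ a :: l, p ≠ r') →
      SSum (crossB r) (a :: l) = SSum (crossB r') (a :: l) := by
    intro r r' ⟨h1, h2⟩ hr'
    have hr'' : r' = (r.1 + 1, r.2) := Prod.ext h1 h2
    subst hr''
    have := SSum_master (crossB r) (crossB (r.1 + 1, r.2))
        (fun p => if p.1 = r.1 + 1 ∧ p.2 ≤ r.2 then 1 else 0) a l ?_
    · rw [this, hcl]; ring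
    · intro x y hm
      have hadj' := chain'_of_zip _ hch x y hm
      have hmem := mem_of_zip hm
      refine crossB_move_right r x y hadj' ?_ ?_
      · intro hc; exact hr' x hmem.1 (Prod.ext hc.1 hc.2)
      · intro hc; exact hr' y hmem.2 (Prod.ext hc.1 hc.2)
  have keyV : ∀ (r r' : Pix), (r'.1 = r.1 ∧ r'.2 = r.2 + 1) →
      (∀ p ∈ a :: l, p ≠ r') →
      SSum (crossB r) (a :: l) = SSum (crossB r') (a :: l) := by
    intro r r' ⟨h1, h2⟩ hr'
    have hr'' : r' = (r.1, r.2 + 1) := Prod.ext h1 h2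
    subst hr''
    have := SSum_master (crossB (r.1, r.2 + 1)) (crossB r) (fun _ => 0) a l ?_
    · rw [this]; ring
    · intro x y hm
      have hadj' := chain'_of_zip _ hch x y hm
      have hmem := mem_of_zip hm
      rw [crossB_move_up r x y hadj' ?_ ?_]
      · ring
      · intro hc; exact hr' x hmem.1 (Prod.ext hc.1 hc.2)
      · intro hc; exact hr' y hmem.2 (Prod.ext hc.1 hc.2)
  unfold Adj4 at hadj
  rcases (by omega : (q'.1 = q.1 + 1 ∧ q'.2 = q.2) ∨ (q.1 = q'.1 + 1 ∧ q.2 = q'.2)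
      ∨ (q'.1 = q.1 ∧ q'.2 = q.2 + 1) ∨ (q.1 = q'.1 ∧ q.2 = q'.2 + 1)) with
    h | h | h | h
  · exact key q q' h hq'
  · exact (key q' q h hq).symm
  · exact keyV q q' h hq'
  · exact (keyV q' q h hq).symm

/-- winding vanishes far away -/
lemma W_far (q : Pix) (a : Pix) (l : List Pix)
    (hfar : ∀ p ∈ a :: l, p.1 ≤ q.1) :
    SSum (crossB q) (a :: l) = 0 := by
  have := SSum_master (crossB q) (fun _ _ => 0) (fun _ => 0) a l ?_
  · rw [this]
    have z : ∀ (b : Pix) (m : List Pix), SSum (fun _ _ => (0:ℤ)) (b :: m) = 0 := by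
      intro b m
      induction m generalizing b with
      | nil => rfl
      | cons c m ih => show (0:ℤ) + _ = 0; rw [ih c]; ring
    rw [z]; ring
  · intro x y hm
    have hmem := mem_of_zip hm
    have h1 := hfar x hmem.1
    have h2 := hfar y hmem.2
    unfold crossB; beta_reduce; split_ifs <;> omega

/-- transport the winding number along a path avoiding the loop -/
lemma W_path (S : Set Pix) (a : Pix) (l : List Pix)
    (hch : (a :: l).Chain' Adj4) (hcl : (a :: l).getLast (by simp) = a)
    (hout : ∀ p ∈ a :: l, p ∉ S) {p0 p1 : Pix}
    (hpath : Relation.ReflTransGen (fun u v => u ∈ S ∧ v ∈ S ∧ Adj4 u v) p0 p1) :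
    SSum (crossB p0) (a :: l) = SSum (crossB p1) (a :: l) := by
  induction hpath with
  | refl => rfl
  | tail h hstep ih =>
    rw [ih]
    exact W_move a l hch hcl _ _ hstep.2.2
      (fun p hp hpb => hout p hp (hpb ▸ hstep.1))
      (fun p hp hpc => hout p hp (hpc ▸ hstep.2.1))



variable {P : Set Pix}

/-- a pixel lies in the box of a piece -/
def InPiece (R : SlabPiece P) (p : Pix) : Prop :=
  R.a ≤ p.1 ∧ p.1 ≤ R.b ∧ R.c ≤ p.2 ∧ p.2 ≤ R.d

lemma InPiece.memP {R : SlabPiece P} {p : Pix} (h : InPiece R p) : p ∈ P := by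
  have := (R.hrows p.2 h.2.2.1 h.2.2.2).2.1 p.1 h.1 h.2.1
  simpa using this

lemma run_eq {y a b a' b' x : ℤ} (h : IsHRun P y a b) (h' : IsHRun P y a' b')
    (h1 : a ≤ x) (h2 : x ≤ b) (h3 : a' ≤ x) (h4 : x ≤ b') : a = a' ∧ b = b' := by
  have c1 : ¬ a < a' := fun hlt => h'.2.2.1 (h.2.1 (a' - 1) (by omega) (by omega))
  have c2 : ¬ a' < a := fun hlt => h.2.2.1 (h'.2.1 (a - 1) (by omega) (by omega))
  have c3 : ¬ b < b' := fun hlt => h.2.2.2 (h'.2.1 (b + 1) (by omega) (by omega))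
  have c4 : ¬ b' < b := fun hlt => h'.2.2.2 (h.2.1 (b' + 1) (by omega) (by omega))
  omega

lemma SlabPiece.ext' {R R' : SlabPiece P} (ha : R.a = R'.a) (hb : R.b = R'.b)
    (hc : R.c = R'.c) (hd : R.d = R'.d) : R = R' := by
  cases R; cases R'; simp_all

/-- two pieces sharing a pixel are equal -/
lemma piece_eq {R R' : SlabPiece P} {p : Pix} (hh : InPiece R p) (hh' : InPiece R' p) :
    R = R' := by
  obtain ⟨u1, u2, u3, u4⟩ := hh
  obtain ⟨v1, v2, v3, v4⟩ := hh'
  obtain ⟨ha, hb⟩ := run_eq (R.hrows p.2 u3 u4) (R'.hrows p.2 v3 v4) u1 u2 v1 v2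
  have hc : R.c = R'.c := by
    by_contra hne
    rcases lt_or_gt_of_ne hne with hlt | hlt
    · exact R'.hbot (by rw [← ha, ← hb]; exact R.hrows (R'.c - 1) (by omega) (by omega))
    · exact R.hbot (by rw [ha, hb]; exact R'.hrows (R.c - 1) (by omega) (by omega))
  have hd : R.d = R'.d := by
    by_contra hne
    rcases lt_or_gt_of_ne hne with hlt | hlt
    · exact R.htop (by rw [ha, hb]; exact R'.hrows (R.d + 1) (by omega) (by omega))
    · exact R'.htop (by rw [← ha, ← hb]; exact R.hrows (R'.d + 1) (by omega) (by omega))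
  exact SlabPiece.ext' ha hb hc hd

open Classical in
/-- every pixel of a finite `P` lies in some slab piece -/
lemma exists_piece (hfin : P.Finite) {p : Pix} (hp : p ∈ P) :
    ∃ R : SlabPiece P, InPiece R p := by
  obtain ⟨N, hN⟩ : ∃ N : ℕ, ∀ q ∈ P, q.1.natAbs ≤ N ∧ q.2.natAbs ≤ N := by
    obtain ⟨N, hN⟩ := (hfin.image (fun q : Pix => q.1.natAbs ⊔ q.2.natAbs)).bddAbove
    refine ⟨N, fun q hq => ?_⟩
    have := hN (Set.mem_image_of_mem _ hq)
    simp only [sup_le_iff] at this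
    omega
  -- horizontal extent
  have hexa : ∃ k : ℕ, (p.1 - k - 1, p.2) ∉ P := by
    refine ⟨p.1.natAbs + N + 1, fun hmem => ?_⟩
    have := (hN _ hmem).1
    omega
  have hexb : ∃ k : ℕ, (p.1 + k + 1, p.2) ∉ P := by
    refine ⟨p.1.natAbs + N + 1, fun hmem => ?_⟩
    have := (hN _ hmem).1
    omega
  set ka := Nat.find hexa with hka
  set kb := Nat.find hexb with hkb
  set a := p.1 - ka with hadef
  set b := p.1 + kb with hbdef
  have hmema : ∀ x : ℤ, a ≤ x → x ≤ p.1 → (x, p.2) ∈ P := by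
    intro x h1 h2
    rcases eq_or_lt_of_le h2 with rfl | hlt
    · simpa using hp
    · have hj : ((p.1 - x).toNat - 1) < ka := by omega
      have := Nat.find_min hexa hj
      simp only [not_not] at this
      have hx : p.1 - ((p.1 - x).toNat - 1 : ℕ) - 1 = x := by omega
      rwa [hx] at this
  have hmemb : ∀ x : ℤ, p.1 ≤ x → x ≤ b → (x, p.2) ∈ P := by
    intro x h1 h2
    rcases eq_or_lt_of_le h1 with rfl | hlt
    · simpa using hp
    · have hj : ((x - p.1).toNat - 1) < kb := by omega
      have := Nat.find_min hexb hj
      simp only [not_not] at this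
      have hx : p.1 + ((x - p.1).toNat - 1 : ℕ) + 1 = x := by omega
      rwa [hx] at this
  have hrun : IsHRun P p.2 a b := by
    refine ⟨by omega, fun x h1 h2 => ?_, ?_, ?_⟩
    · rcases le_or_gt x p.1 with h | h
      · exact hmema x h1 h
      · exact hmemb x (le_of_lt h) h2
    · have := Nat.find_spec hexa
      simpa [hadef] using this
    · have := Nat.find_spec hexb
      simpa [hbdef] using this
  -- vertical extent
  have hexd : ∃ m : ℕ, ¬ IsHRun P (p.2 + m + 1) a b := by
    refine ⟨p.2.natAbs + N + 1, fun hrun' => ?_⟩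
    have hmem := hrun'.2.1 a le_rfl hrun'.1
    have := (hN _ hmem).2
    omega
  have hexc : ∃ m : ℕ, ¬ IsHRun P (p.2 - m - 1) a b := by
    refine ⟨p.2.natAbs + N + 1, fun hrun' => ?_⟩
    have hmem := hrun'.2.1 a le_rfl hrun'.1
    have := (hN _ hmem).2
    omega
  set kd := Nat.find hexd with hkd
  set kc := Nat.find hexc with hkc
  set c := p.2 - kc with hcdef
  set d := p.2 + kd with hddef
  have hrowsu : ∀ y : ℤ, p.2 ≤ y → y ≤ d → IsHRun P y a b := by
    intro y h1 h2
    rcases eq_or_lt_of_le h1 with rfl | hlt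
    · exact hrun
    · have hj : ((y - p.2).toNat - 1) < kd := by omega
      have := Nat.find_min hexd hj
      simp only [not_not] at this
      have hx : p.2 + ((y - p.2).toNat - 1 : ℕ) + 1 = y := by omega
      rwa [hx] at this
  have hrowsd : ∀ y : ℤ, c ≤ y → y ≤ p.2 → IsHRun P y a b := by
    intro y h1 h2
    rcases eq_or_lt_of_le h2 with rfl | hlt
    · exact hrun
    · have hj : ((p.2 - y).toNat - 1) < kc := by omega
      have := Nat.find_min hexc hj
      simp only [not_not] at this
      have hx : p.2 - ((p.2 - y).toNat - 1 : ℕ) - 1 = y := by omega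
      rwa [hx] at this
  have hAll : ∀ y : ℤ, c ≤ y → y ≤ d → IsHRun P y a b := by
    intro y h1 h2
    rcases le_or_gt y p.2 with h | h
    · exact hrowsd y h1 h
    · exact hrowsu y (le_of_lt h) h2
  have hT : ¬ IsHRun P (d + 1) a b := by
    have := Nat.find_spec hexd
    simpa [hddef] using this
  have hB : ¬ IsHRun P (c - 1) a b := by
    have := Nat.find_spec hexc
    simpa [hcdef] using this
  exact ⟨⟨a, b, c, d, by omega, hAll, hT, hB⟩, show a ≤ p.1 by omega,
    show p.1 ≤ b by omega, show c ≤ p.2 by omega, show p.2 ≤ d by omega⟩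



variable {P : Set Pix}

/-- pieces containing 4-adjacent pixels are equal or graph-adjacent -/
lemma adj_pieces {R R' : SlabPiece P} {p q : Pix} (hp : InPiece R p) (hq : InPiece R' q)
    (hadj : Adj4 p q) :
    R = R' ∨ (SimpleGraph.fromRel (fun A B : SlabPiece P => SlabAdj A B)).Adj R R' := by
  by_cases heq : R = R'
  · exact Or.inl heq
  refine Or.inr ((SimpleGraph.fromRel_adj _ _ _).mpr ⟨heq, ?_⟩)
  obtain ⟨u1, u2, u3, u4⟩ := hp
  obtain ⟨v1, v2, v3, v4⟩ := hq
  unfold Adj4 at hadj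
  -- horizontal adjacency forces equality (contradiction), vertical gives SlabAdj
  rcases (by omega : (q.1 = p.1 + 1 ∧ q.2 = p.2) ∨ (q.1 = p.1 - 1 ∧ q.2 = p.2)
      ∨ (q.1 = p.1 ∧ q.2 = p.2 + 1) ∨ (q.1 = p.1 ∧ q.2 = p.2 - 1)) with
    h | h | h | h
  · -- q to the right of p: same run, same piece: contradiction
    exfalso; apply heq
    have hq1 : R.a ≤ q.1 ∧ q.1 ≤ R.b := by
      rcases le_or_gt q.1 R.b with hle | hlt
      · exact ⟨by omega, hle⟩
      · exfalso
        have hrun := R.hrows p.2 u3 u4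
        have : q.1 = R.b + 1 := by omega
        have hmem := (R'.hrows q.2 v3 v4).2.1 q.1 v1 v2
        rw [this] at hmem
        rw [h.2] at hmem
        exact hrun.2.2.2 hmem
    exact piece_eq (p := q) ⟨hq1.1, hq1.2, by omega, by omega⟩ ⟨v1, v2, v3, v4⟩
  · exfalso; apply heq
    have hq1 : R.a ≤ q.1 ∧ q.1 ≤ R.b := by
      rcases le_or_gt R.a q.1 with hle | hlt
      · exact ⟨hle, by omega⟩
      · exfalso
        have hrun := R.hrows p.2 u3 u4
        have : q.1 = R.a - 1 := by omega
        have hmem := (R'.hrows q.2 v3 v4).2.1 q.1 v1 v2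
        rw [this] at hmem
        rw [h.2] at hmem
        exact hrun.2.2.1 hmem
    exact piece_eq (p := q) ⟨hq1.1, hq1.2, by omega, by omega⟩ ⟨v1, v2, v3, v4⟩
  · -- q above p
    left
    have hRd : R.d = p.2 := by
      rcases eq_or_lt_of_le u4 with he | hlt
      · omega
      · exfalso; apply heq
        -- row p.2+1 is in R, and the run there contains q.1 = p.1
        exact piece_eq (p := q) ⟨by omega, by omega, by omega, by omega⟩ ⟨v1, v2, v3, v4⟩
    have hRc : R'.c = q.2 := by
      rcases eq_or_lt_of_le v3 with he | hlt
      · omega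
      · exfalso; apply heq
        exact piece_eq (p := p) ⟨u1, u2, u3, u4⟩ ⟨by omega, by omega, by omega, by omega⟩
    exact ⟨Or.inl (by omega), by omega⟩
  · -- q below p
    left
    have hRd : R'.d = q.2 := by
      rcases eq_or_lt_of_le v4 with he | hlt
      · omega
      · exfalso; apply heq
        exact piece_eq (p := p) ⟨u1, u2, u3, u4⟩ ⟨by omega, by omega, by omega, by omega⟩
    have hRc : R.c = p.2 := by
      rcases eq_or_lt_of_le u3 with he | hlt
      · omega
      · exfalso; apply heq
        exact piece_eq (p := q) ⟨by omega, by omega, by omega, by omega⟩ ⟨v1, v2, v3, v4⟩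
    exact ⟨Or.inr (by omega), by omega⟩

lemma slab_connected (hfin : P.Finite) (hconn : Connected4 P) :
    (SimpleGraph.fromRel (fun A B : SlabPiece P => SlabAdj A B)).Connected := by
  set G := SimpleGraph.fromRel (fun A B : SlabPiece P => SlabAdj A B) with hG
  obtain ⟨⟨p0, hp0⟩, hpath⟩ := hconn
  have hne : Nonempty (SlabPiece P) := ⟨(exists_piece hfin hp0).choose⟩
  refine ⟨?_⟩
  intro R R'
  have key : ∀ p q : Pix, Relation.ReflTransGen
      (fun a b => a ∈ P ∧ b ∈ P ∧ Adj4 a b) p q →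
      ∀ (A B : SlabPiece P), InPiece A p → InPiece B q → G.Reachable A B := by
    intro p q hpq
    induction hpq with
    | refl =>
      intro A B hA hB
      rw [piece_eq hA hB]
    | tail hsteps hstep ih =>
      rename_i b c
      intro A B hA hB
      obtain ⟨Rb, hRb⟩ := exists_piece hfin hstep.1
      have h1 := ih A Rb hA hRb
      rcases adj_pieces hRb hB hstep.2.2 with he | hadj
      · exact h1.trans (by rw [he])
      · exact h1.trans hadj.reachable
  have hin : ∀ A : SlabPiece P, InPiece A (A.a, A.c) :=
    fun A => ⟨le_rfl, (A.hrows A.c le_rfl A.hcd).1, le_rfl, A.hcd⟩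
  exact key _ _ (hpath _ (hin R).memP _ (hin R').memP) R R' (hin R) (hin R')




/-- horizontal path from `(x₁,y)` to `(x₂,y)` -/
def hpath (y x₁ x₂ : ℤ) : List Pix :=
  seg (x₁, y) (if x₁ ≤ x₂ then (1, 0) else (-1, 0)) (x₂ - x₁).natAbs

/-- vertical path from `(x,y₁)` to `(x,y₂)` -/
def vpath (x y₁ y₂ : ℤ) : List Pix :=
  seg (x, y₁) (if y₁ ≤ y₂ then (0, 1) else (0, -1)) (y₂ - y₁).natAbs

lemma hpath_ne_nil (y x₁ x₂ : ℤ) : hpath y x₁ x₂ ≠ [] := seg_ne_nil _ _ _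
lemma vpath_ne_nil (x y₁ y₂ : ℤ) : vpath x y₁ y₂ ≠ [] := seg_ne_nil _ _ _

lemma hpath_head (y x₁ x₂ : ℤ) : (hpath y x₁ x₂).head (hpath_ne_nil y x₁ x₂) = (x₁, y) :=
  seg_head _ _ _
lemma vpath_head (x y₁ y₂ : ℤ) : (vpath x y₁ y₂).head (vpath_ne_nil x y₁ y₂) = (x, y₁) :=
  seg_head _ _ _

lemma hpath_getLast (y x₁ x₂ : ℤ) :
    (hpath y x₁ x₂).getLast (hpath_ne_nil y x₁ x₂) = (x₂, y) := by
  unfold hpath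
  rw [seg_getLast]
  split_ifs with h <;> (simp only [Prod.mk.injEq]; constructor <;> omega)

lemma vpath_getLast (x y₁ y₂ : ℤ) :
    (vpath x y₁ y₂).getLast (vpath_ne_nil x y₁ y₂) = (x, y₂) := by
  unfold vpath
  rw [seg_getLast]
  split_ifs with h <;> (simp only [Prod.mk.injEq]; constructor <;> omega)

lemma hpath_mem (y x₁ x₂ : ℤ) :
    ∀ p ∈ hpath y x₁ x₂, p.2 = y ∧ min x₁ x₂ ≤ p.1 ∧ p.1 ≤ max x₁ x₂ := by
  intro p hp
  unfold hpath at hp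
  split_ifs at hp with h <;>
  · obtain ⟨k, hk, hp⟩ := seg_mem _ _ _ p hp
    subst hp; simp; omega

lemma vpath_mem (x y₁ y₂ : ℤ) :
    ∀ p ∈ vpath x y₁ y₂, p.1 = x ∧ min y₁ y₂ ≤ p.2 ∧ p.2 ≤ max y₁ y₂ := by
  intro p hp
  unfold vpath at hp
  split_ifs at hp with h <;>
  · obtain ⟨k, hk, hp⟩ := seg_mem _ _ _ p hp
    subst hp; simp; omega

lemma hpath_chain (y x₁ x₂ : ℤ) : (hpath y x₁ x₂).Chain' Adj4 := by
  unfold hpath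
  split_ifs with h <;> exact seg_chain _ _ (by unfold Adj4; simp) _

lemma vpath_chain (x y₁ y₂ : ℤ) : (vpath x y₁ y₂).Chain' Adj4 := by
  unfold vpath
  split_ifs with h <;> exact seg_chain _ _ (by unfold Adj4; simp) _

lemma hpath_steps (y x₁ x₂ : ℤ) :
    ∀ u v : Pix, (u, v) ∈ (hpath y x₁ x₂).zip (hpath y x₁ x₂).tail →
      v.2 = u.2 ∧ (v.1 = u.1 + 1 ∨ v.1 = u.1 - 1) := by
  intro u v huv
  unfold hpath at huv
  split_ifs at huv with h <;>
  · obtain ⟨hv, _⟩ := seg_steps _ _ _ u v huv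
    subst hv; simp; try omega

lemma vpath_steps (x y₁ y₂ : ℤ) :
    ∀ u v : Pix, (u, v) ∈ (vpath x y₁ y₂).zip (vpath x y₁ y₂).tail →
      v.1 = u.1 := by
  intro u v huv
  unfold vpath at huv
  split_ifs at huv with h <;>
  · obtain ⟨hv, _⟩ := seg_steps _ _ _ u v huv
    subst hv; simp

/-- SSum over a plain append, with the junction step -/
lemma SSum_append (f : Pix → Pix → ℤ) (l₁ l₂ : List Pix) (h1 : l₁ ≠ []) (h2 : l₂ ≠ []) :
    SSum f (l₁ ++ l₂) = SSum f l₁ + f (l₁.getLast h1) (l₂.head h2) + SSum f l₂ := by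
  induction l₁ with
  | nil => simp at h1
  | cons a l₁ ih =>
    cases l₁ with
    | nil =>
      cases l₂ with
      | nil => simp at h2
      | cons c l₂ =>
        show f a c + SSum f (c :: l₂) = SSum f [a] + f a c + SSum f (c :: l₂)
        rw [show SSum f [a] = 0 from rfl]; ring
    | cons b l₁ =>
      have : (a :: b :: l₁) ++ l₂ = a :: ((b :: l₁) ++ l₂) := by simp
      rw [this]
      have hne : (b :: l₁) ++ l₂ = b :: (l₁ ++ l₂) := by simp
      rw [hne]
      show f a b + _ = _
      rw [← hne, ih (by simp)]
      have : (a :: b :: l₁).getLast (by simp) = (b :: l₁).getLast (by simp) := by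
        simp [List.getLast_cons]
      rw [this]
      show _ = f a b + SSum f (b :: l₁) + _ + _
      ring

lemma chain'_append_of (R : Pix → Pix → Prop) (l₁ l₂ : List Pix)
    (hc1 : l₁.Chain' R) (hc2 : l₂.Chain' R) (h1 : l₁ ≠ []) (h2 : l₂ ≠ [])
    (hj : R (l₁.getLast h1) (l₂.head h2)) : (l₁ ++ l₂).Chain' R := by
  rw [List.Chain', List.isChain_append]
  refine ⟨hc1, hc2, ?_⟩
  intro x hx y hy
  rw [List.getLast?_eq_getLast h1] at hx
  rw [List.head?_eq_head h2] at hy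
  cases hx; cases hy; exact hj

lemma glue_chain (R : Pix → Pix → Prop) (l₁ l₂ : List Pix)
    (hc1 : l₁.Chain' R) (hc2 : l₂.Chain' R) (h1 : l₁ ≠ []) (h2 : l₂ ≠ [])
    (hg : l₁.getLast h1 = l₂.head h2) : (l₁ ++ l₂.tail).Chain' R := by
  cases l₂ with
  | nil => simp at h2
  | cons c l₂' =>
    cases l₂' with
    | nil => simpa using hc1
    | cons e l₂'' =>
      refine chain'_append_of R l₁ (e :: l₂'') hc1 (List.isChain_cons_cons.mp hc2).2 h1 (by simp) ?_
      have hc := (List.isChain_cons_cons.mp hc2).1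
      simp at hg ⊢
      rw [show l₁.getLast h1 = c from hg]
      exact hc

lemma glue_getLast (l₁ l₂ : List Pix) (h1 : l₁ ≠ []) (h2 : l₂ ≠ [])
    (hg : l₁.getLast h1 = l₂.head h2) :
    ∃ hne : l₁ ++ l₂.tail ≠ [], (l₁ ++ l₂.tail).getLast hne = l₂.getLast h2 := by
  cases l₂ with
  | nil => simp at h2
  | cons c l₂' =>
    cases l₂' with
    | nil =>
      refine ⟨by simpa using h1, ?_⟩
      simp only [List.tail_cons, List.append_nil]
      simpa using hg
    | cons e l₂'' =>
      refine ⟨by simp, ?_⟩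
      simp only [List.tail_cons]
      simp [List.getLast_cons]

lemma append_getLast (l₁ l₂ : List Pix) (h2 : l₂ ≠ []) :
    ∃ hne : l₁ ++ l₂ ≠ [], (l₁ ++ l₂).getLast hne = l₂.getLast h2 :=
  ⟨by simp [h2], List.getLast_append_of_ne_nil _ h2⟩

lemma append_head (l₁ l₂ : List Pix) (h1 : l₁ ≠ []) :
    ∃ hne : l₁ ++ l₂ ≠ [], (l₁ ++ l₂).head hne = l₁.head h1 := by
  cases l₁ with
  | nil => simp at h1
  | cons a l₁ => exact ⟨by simp, rfl⟩


/-! ### the slab graph and loop routing -/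

abbrev SG (P : Set Pix) : SimpleGraph (SlabPiece P) :=
  SimpleGraph.fromRel (fun A B : SlabPiece P => SlabAdj A B)

lemma adj_overlap {A B : SlabPiece P} (h : (SG P).Adj A B) :
    A ≠ B ∧ (A.d + 1 = B.c ∨ B.d + 1 = A.c) ∧ max A.a B.a ≤ min A.b B.b := by
  rw [SimpleGraph.fromRel_adj] at h
  obtain ⟨hne, h | h⟩ := h
  · exact ⟨hne, h.1, h.2⟩
  · exact ⟨hne, h.1.symm, by rw [max_comm, min_comm]; exact h.2⟩

/-- two distinct pieces sharing a row have disjoint column ranges -/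
lemma piece_row_disjoint {A B : SlabPiece P} (hne : A ≠ B) (y : ℤ)
    (h1 : A.c ≤ y) (h2 : y ≤ A.d) (h3 : B.c ≤ y) (h4 : y ≤ B.d) :
    A.b < B.a ∨ B.b < A.a := by
  by_contra hcon
  push_neg at hcon
  have hA := A.hrows y h1 h2
  have hB := B.hrows y h3 h4
  have hx : max A.a B.a ≤ min A.b B.b := by
    have := hA.1; have := hB.1; omega
  exact hne (piece_eq (p := (max A.a B.a, y))
    ⟨le_max_left _ _, le_trans hx (min_le_left _ _), h1, h2⟩
    ⟨le_max_right _ _, le_trans hx (min_le_right _ _), h3, h4⟩)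

def HU (g p : Pix) : ℤ := if g.1 + 1 ≤ p.1 ∧ g.2 + 1 ≤ p.2 then 1 else 0

lemma SSum_master' (f f' : Pix → Pix → ℤ) (h : Pix → ℤ) (l : List Pix) (hne : l ≠ [])
    (hpt : ∀ x y, (x, y) ∈ l.zip l.tail → f x y = f' x y + (h y - h x)) :
    SSum f l = SSum f' l + (h (l.getLast hne) - h (l.head hne)) := by
  cases l with
  | nil => simp at hne
  | cons a l => exact SSum_master f f' h a l hpt

lemma SSum_crossU_vpath (g : Pix) (x y₁ y₂ : ℤ) :
    SSum (crossU g) (vpath x y₁ y₂) = 0 := by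
  have := SSum_master' (crossU g) (fun _ _ => 0) (fun _ => 0) (vpath x y₁ y₂)
    (vpath_ne_nil x y₁ y₂) ?_
  · rw [this]
    have z : ∀ (m : List Pix), SSum (fun _ _ => (0:ℤ)) m = 0 := by
      intro m
      induction m with
      | nil => rfl
      | cons c m ih =>
        cases m with
        | nil => rfl
        | cons e m => rw [SSum_cons, ih]; ring
    rw [z]; ring
  · intro u v huv
    have := vpath_steps x y₁ y₂ u v huv
    unfold crossU; beta_reduce; split_ifs <;> omega

lemma SSum_crossU_hpath (g : Pix) (y x₁ x₂ : ℤ) :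
    SSum (crossU g) (hpath y x₁ x₂) = HU g (x₂, y) - HU g (x₁, y) := by
  have := SSum_master' (crossU g) (fun _ _ => 0) (HU g) (hpath y x₁ x₂)
    (hpath_ne_nil y x₁ x₂) ?_
  · rw [this, hpath_getLast, hpath_head]
    have z : ∀ (m : List Pix), SSum (fun _ _ => (0:ℤ)) m = 0 := by
      intro m
      induction m with
      | nil => rfl
      | cons c m ih =>
        cases m with
        | nil => rfl
        | cons e m => rw [SSum_cons, ih]; ring
    rw [z]; ring
  · intro u v huv
    obtain ⟨h2, h1⟩ := hpath_steps y x₁ x₂ u v huv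
    unfold crossU HU; beta_reduce; split_ifs <;> omega

/-- the path inside one rectangle: vertical at column `x` from row `r` to `r'`,
then horizontal along row `r'` to column `x'` -/
def rectPath (x r x' r' : ℤ) : List Pix := vpath x r r' ++ (hpath r' x x').tail

lemma rectPath_glue (x r x' r' : ℤ) :
    (vpath x r r').getLast (vpath_ne_nil x r r') =
      (hpath r' x x').head (hpath_ne_nil r' x x') := by
  rw [vpath_getLast, hpath_head]

lemma rectPath_ne_nil (x r x' r' : ℤ) : rectPath x r x' r' ≠ [] :=
  (glue_getLast _ _ (vpath_ne_nil x r r') (hpath_ne_nil r' x x') (rectPath_glue x r x' r')).1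

lemma rectPath_getLast (x r x' r' : ℤ) :
    (rectPath x r x' r').getLast (rectPath_ne_nil x r x' r') = (x', r') := by
  obtain ⟨hne, hl⟩ := glue_getLast _ _ (vpath_ne_nil x r r') (hpath_ne_nil r' x x')
    (rectPath_glue x r x' r')
  rw [show (rectPath x r x' r').getLast (rectPath_ne_nil x r x' r')
    = (vpath x r r' ++ (hpath r' x x').tail).getLast hne from rfl, hl, hpath_getLast]

lemma rectPath_head (x r x' r' : ℤ) :
    (rectPath x r x' r').head (rectPath_ne_nil x r x' r') = (x, r) := by
  obtain ⟨hne, hh⟩ := append_head (vpath x r r') (hpath r' x x').tail (vpath_ne_nil x r r')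
  rw [show (rectPath x r x' r').head (rectPath_ne_nil x r x' r')
    = (vpath x r r' ++ (hpath r' x x').tail).head hne from rfl, hh, vpath_head]

lemma rectPath_chain (x r x' r' : ℤ) : (rectPath x r x' r').Chain' Adj4 :=
  glue_chain _ _ _ (vpath_chain x r r') (hpath_chain r' x x') (vpath_ne_nil x r r')
    (hpath_ne_nil r' x x') (rectPath_glue x r x' r')

lemma rectPath_mem (x r x' r' : ℤ) :
    ∀ p ∈ rectPath x r x' r',
      (p.1 = x ∧ min r r' ≤ p.2 ∧ p.2 ≤ max r r') ∨
      (p.2 = r' ∧ min x x' ≤ p.1 ∧ p.1 ≤ max x x') := by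
  intro p hp
  rcases List.mem_append.mp hp with hp | hp
  · exact Or.inl (vpath_mem x r r' p hp)
  · exact Or.inr (hpath_mem r' x x' p (List.mem_of_mem_tail hp))

lemma SSum_crossU_rectPath (g : Pix) (x r x' r' : ℤ) :
    SSum (crossU g) (rectPath x r x' r') = HU g (x', r') - HU g (x, r') := by
  rw [show rectPath x r x' r' = vpath x r r' ++ (hpath r' x x').tail from rfl,
    zip_append_tail _ _ (vpath_ne_nil x r r') (hpath_ne_nil r' x x') (rectPath_glue x r x' r'),
    SSum_crossU_vpath, SSum_crossU_hpath]
  ring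

variable (R₀ : SlabPiece P) (x₀ : ℤ)

/-- route a walk ending at `R₀` through pixel paths, finishing at `(x₀, R₀.c)` -/
def route : {A : SlabPiece P} → (SG P).Walk A R₀ → ℤ → ℤ → List Pix
  | _, SimpleGraph.Walk.nil, x, r => hpath r x x₀
  | A, @SimpleGraph.Walk.cons _ _ _ B _ _ w, x, r =>
      if A.d + 1 = B.c then
        rectPath x r (max A.a B.a) A.d ++ route w (max A.a B.a) B.c
      else
        rectPath x r (max A.a B.a) A.c ++ route w (max A.a B.a) B.d

/-- the column at which the walk finally enters `R₀` -/
def entryCol : {A : SlabPiece P} → (SG P).Walk A R₀ → ℤ → ℤ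
  | _, SimpleGraph.Walk.nil, x => x
  | A, @SimpleGraph.Walk.cons _ _ _ B _ _ w, _ => entryCol w (max A.a B.a)

lemma entryCol_last : ∀ (n : ℕ) {A : SlabPiece P} (w : (SG P).Walk A R₀), w.length = n → ¬w.Nil →
    ∃ L : SlabPiece P, L ∈ w.support.dropLast ∧ (SG P).Adj L R₀ ∧
      ∀ x : ℤ, entryCol R₀ w x = max L.a R₀.a := by
  intro n
  induction n using Nat.strong_induction_on with
  | _ n ih =>
    intro A w hlen hn
    cases w with
    | nil => exact absurd SimpleGraph.Walk.Nil.nil hn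
    | @cons A B _ h w =>
      cases w with
      | nil =>
        refine ⟨A, ?_, h, fun x => by simp [entryCol]⟩
        simp [SimpleGraph.Walk.support_cons]
      | @cons B' C _ h' w' =>
        obtain ⟨L, hm, hadj, hE⟩ := ih (SimpleGraph.Walk.cons h' w').length
          (by rw [← hlen]; simp [SimpleGraph.Walk.length_cons]) _ rfl
          SimpleGraph.Walk.not_nil_cons
        refine ⟨L, ?_, hadj, fun x => by rw [entryCol]; exact hE _⟩
        rw [SimpleGraph.Walk.support_cons]
        have hsne := (SimpleGraph.Walk.cons h' w').support_ne_nil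
        obtain ⟨c0, l0, hc⟩ := List.exists_cons_of_ne_nil hsne
        rw [hc] at hm ⊢
        cases l0 with
        | nil => simp at hm
        | cons c1 l1 => rw [List.dropLast_cons₂]; exact List.mem_cons_of_mem _ hm

lemma route_spec (g : Pix)
    (hga : R₀.a ≤ g.1) (hgb : g.1 + 1 ≤ R₀.b) (hgrow : R₀.c = g.2 + 1)
    (hx₀a : R₀.a ≤ x₀) (hx₀b : x₀ ≤ R₀.b) :
    ∀ (n : ℕ) {A : SlabPiece P} (w : (SG P).Walk A R₀) (x r : ℤ), w.length = n →
    (∀ v ∈ w.support, v.c ≤ R₀.c) →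
    R₀ ∉ w.support.dropLast →
    A.a ≤ x → x ≤ A.b → A.c ≤ r → r ≤ A.d →
    (w.Nil → r = R₀.c) →
    ∃ hne : route R₀ x₀ w x r ≠ [],
      (route R₀ x₀ w x r).head hne = (x, r) ∧
      (route R₀ x₀ w x r).getLast hne = (x₀, R₀.c) ∧
      (route R₀ x₀ w x r).Chain' Adj4 ∧
      (∀ p ∈ route R₀ x₀ w x r, p ∈ P) ∧
      SSum (crossU g) (route R₀ x₀ w x r) =
        HU g (x₀, R₀.c) - HU g (entryCol R₀ w x, R₀.c) := by
  intro n
  induction n using Nat.strong_induction_on with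
  | _ n ih =>
  intro A w x r hlen hmax hint hxa hxb hrc hrd hnil
  cases w with
  | nil =>
    have hr : r = R₀.c := hnil SimpleGraph.Walk.Nil.nil
    simp only [route, entryCol]
    refine ⟨hpath_ne_nil r x x₀, hpath_head r x x₀, ?_, hpath_chain r x x₀, ?_, ?_⟩
    · rw [hpath_getLast, hr]
    · intro p hp
      obtain ⟨h2, h3, h4⟩ := hpath_mem r x x₀ p hp
      exact InPiece.memP (R := R₀) ⟨by simp at h3 ⊢; omega, by simp at h4 ⊢; omega,
        by omega, by rw [h2, hr]; exact R₀.hcd⟩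
    · rw [SSum_crossU_hpath, hr]
  | @cons A B _ h w =>
    obtain ⟨hABne, hdir, hover⟩ := adj_overlap h
    have hAmem : A ∈ (SimpleGraph.Walk.cons h w).support :=
      SimpleGraph.Walk.start_mem_support _
    have hdrop : (SimpleGraph.Walk.cons h w).support.dropLast = A :: w.support.dropLast := by
      rw [SimpleGraph.Walk.support_cons]
      obtain ⟨c0, l0, hc⟩ := List.exists_cons_of_ne_nil w.support_ne_nil
      rw [hc, List.dropLast_cons₂]
    have hAne : A ≠ R₀ := by
      intro he; apply hint; rw [hdrop, he]; exact List.mem_cons_self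
    have hintw : R₀ ∉ w.support.dropLast := by
      intro hm; exact hint (by rw [hdrop]; exact List.mem_cons_of_mem _ hm)
    have hmaxw : ∀ v ∈ w.support, v.c ≤ R₀.c := by
      intro v hv
      exact hmax v (by rw [SimpleGraph.Walk.support_cons]; exact List.mem_cons_of_mem _ hv)
    have hAc : A.c ≤ R₀.c := hmax A hAmem
    have hBc : B.c ≤ R₀.c := hmaxw B (SimpleGraph.Walk.start_mem_support _)
    have hAab : A.a ≤ A.b := (A.hrows A.c le_rfl A.hcd).1
    have hBab : B.a ≤ B.b := (B.hrows B.c le_rfl B.hcd).1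
    set X := max A.a B.a with hX
    have hXA : A.a ≤ X ∧ X ≤ A.b := ⟨le_max_left _ _, le_trans hover (min_le_left _ _)⟩
    have hXB : B.a ≤ X ∧ X ≤ B.b := ⟨le_max_right _ _, le_trans hover (min_le_right _ _)⟩
    -- the zero contribution of this rectangle
    have hrectzero : ∀ r' : ℤ, A.c ≤ r' → r' ≤ A.d → HU g (X, r') - HU g (x, r') = 0 := by
      intro r' h1 h2
      rcases le_or_gt r' g.2 with hr' | hr'
      · unfold HU; split_ifs <;> omega
      · have hAcont : A.c ≤ R₀.c ∧ R₀.c ≤ A.d := ⟨hAc, by omega⟩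
        rcases piece_row_disjoint hAne R₀.c hAcont.1 hAcont.2 le_rfl R₀.hcd with hs | hs
        · unfold HU; split_ifs <;> omega
        · unfold HU; split_ifs <;> omega
    by_cases hif : A.d + 1 = B.c
    · have hroute : route R₀ x₀ (SimpleGraph.Walk.cons h w) x r =
          rectPath x r X A.d ++ route R₀ x₀ w X B.c := by
        rw [route, if_pos hif]
      have hnil' : w.Nil → B.c = R₀.c := by
        intro hn; rw [hn.eq]
      obtain ⟨hne2, hh2, hl2, hch2, hm2, hs2⟩ :=
        ih w.length (by rw [← hlen]; simp [SimpleGraph.Walk.length_cons]) w X B.c rfl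
          hmaxw hintw hXB.1 hXB.2 le_rfl B.hcd hnil'
      have hjun : Adj4 ((rectPath x r X A.d).getLast (rectPath_ne_nil x r X A.d))
          ((route R₀ x₀ w X B.c).head hne2) := by
        rw [rectPath_getLast, hh2]
        unfold Adj4; simp; omega
      obtain ⟨hne0, hh0⟩ := append_head (rectPath x r X A.d) (route R₀ x₀ w X B.c)
        (rectPath_ne_nil x r X A.d)
      obtain ⟨hne1, hl1⟩ := append_getLast (rectPath x r X A.d) (route R₀ x₀ w X B.c) hne2
      rw [hroute]
      refine ⟨hne0, ?_, ?_, ?_, ?_, ?_⟩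
      · rw [hh0, rectPath_head]
      · rw [hl1, hl2]
      · exact chain'_append_of _ _ _ (rectPath_chain x r X A.d) hch2
          (rectPath_ne_nil x r X A.d) hne2 hjun
      · intro p hp
        rcases List.mem_append.mp hp with hp | hp
        · rcases rectPath_mem x r X A.d p hp with ⟨h1, h2, h3⟩ | ⟨h1, h2, h3⟩
          · exact InPiece.memP (R := A) ⟨by omega, by omega, by simp at h2; omega,
              by simp at h3; omega⟩
          · exact InPiece.memP (R := A) ⟨by simp at h2; omega, by simp at h3; omega,
              by omega, by omega⟩
        · exact hm2 p hp
      · rw [SSum_append _ _ _ (rectPath_ne_nil x r X A.d) hne2,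
          SSum_crossU_rectPath, rectPath_getLast, hh2, hs2]
        have hj0 : crossU g (X, A.d) (X, B.c) = 0 := by
          unfold crossU; split_ifs <;> omega
        have hz := hrectzero A.d A.hcd le_rfl
        rw [entryCol, hj0]
        linarith [hz]
    · have hdir' : B.d + 1 = A.c := by
        rcases hdir with hd | hd
        · exact absurd hd hif
        · exact hd
      have hroute : route R₀ x₀ (SimpleGraph.Walk.cons h w) x r =
          rectPath x r X A.c ++ route R₀ x₀ w X B.d := by
        rw [route, if_neg hif]
      have hnil' : w.Nil → B.d = R₀.c := by
        intro hn
        exfalso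
        have hBR : B = R₀ := hn.eq
        rw [hBR] at hdir'
        have := R₀.hcd
        omega
      obtain ⟨hne2, hh2, hl2, hch2, hm2, hs2⟩ :=
        ih w.length (by rw [← hlen]; simp [SimpleGraph.Walk.length_cons]) w X B.d rfl
          hmaxw hintw hXB.1 hXB.2 B.hcd le_rfl hnil'
      have hjun : Adj4 ((rectPath x r X A.c).getLast (rectPath_ne_nil x r X A.c))
          ((route R₀ x₀ w X B.d).head hne2) := by
        rw [rectPath_getLast, hh2]
        unfold Adj4; simp; omega
      obtain ⟨hne0, hh0⟩ := append_head (rectPath x r X A.c) (route R₀ x₀ w X B.d)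
        (rectPath_ne_nil x r X A.c)
      obtain ⟨hne1, hl1⟩ := append_getLast (rectPath x r X A.c) (route R₀ x₀ w X B.d) hne2
      rw [hroute]
      refine ⟨hne0, ?_, ?_, ?_, ?_, ?_⟩
      · rw [hh0, rectPath_head]
      · rw [hl1, hl2]
      · exact chain'_append_of _ _ _ (rectPath_chain x r X A.c) hch2
          (rectPath_ne_nil x r X A.c) hne2 hjun
      · intro p hp
        rcases List.mem_append.mp hp with hp | hp
        · rcases rectPath_mem x r X A.c p hp with ⟨h1, h2, h3⟩ | ⟨h1, h2, h3⟩
          · exact InPiece.memP (R := A) ⟨by omega, by omega, by simp at h2; omega,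
              by simp at h3; omega⟩
          · exact InPiece.memP (R := A) ⟨by simp at h2; omega, by simp at h3; omega,
              by omega, by omega⟩
        · exact hm2 p hp
      · rw [SSum_append _ _ _ (rectPath_ne_nil x r X A.c) hne2,
          SSum_crossU_rectPath, rectPath_getLast, hh2, hs2]
        have hj0 : crossU g (X, A.c) (X, B.d) = 0 := by
          unfold crossU; split_ifs <;> omega
        have hz := hrectzero A.c le_rfl A.hcd
        rw [entryCol, hj0]
        linarith [hz]

lemma SSum_cons' (f : Pix → Pix → ℤ) (a : Pix) (l : List Pix) (hne : l ≠ []) :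
    SSum f (a :: l) = f a (l.head hne) + SSum f l := by
  cases l with
  | nil => simp at hne
  | cons b l => rfl

/-- the slab adjacency graph of a hole-free polyomino is acyclic -/
lemma slab_acyclic (hfin : P.Finite) (hholefree : Connected4 Pᶜ) :
    (SG P).IsAcyclic := by
  classical
  intro V0 c hc
  -- pick a piece of maximal `c` on the cycle
  obtain ⟨R₀, hR₀mem, hR₀max⟩ : ∃ R₀ ∈ c.support, ∀ v ∈ c.support, v.c ≤ R₀.c := by
    rcases hargm : c.support.argmax (fun R => R.c) with _ | m
    · exact absurd (List.argmax_eq_none.mp hargm) c.support_ne_nil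
    · exact ⟨m, List.argmax_mem hargm, fun v hv => List.le_of_mem_argmax hv hargm⟩
  have hdsup0 : ∀ u ∈ (c.rotate R₀ hR₀mem).support, u.c ≤ R₀.c := by
    intro u hu
    rw [SimpleGraph.Walk.support_eq_cons] at hu
    rcases List.mem_cons.mp hu with rfl | hu
    · exact le_rfl
    · exact hR₀max u (List.mem_of_mem_tail
        (((SimpleGraph.Walk.support_rotate c R₀ hR₀mem).mem_iff).mp hu))
  have hd0 : (c.rotate R₀ hR₀mem).IsCycle := hc.rotate hR₀mem
  revert hd0 hdsup0
  generalize c.rotate R₀ hR₀mem = d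
  intro hdsup hd
  cases d with
  | nil => exact SimpleGraph.Walk.IsCycle.not_of_nil hd
  | @cons _ S₂ _ h₂ d₁ =>
    have hlen3 : 3 ≤ d₁.length + 1 := by
      have := hd.three_le_length
      rwa [SimpleGraph.Walk.length_cons] at this
    have hnodup : d₁.support.Nodup := by
      have := hd.support_nodup
      rwa [SimpleGraph.Walk.support_cons, List.tail_cons] at this
    have hmax₁ : ∀ v ∈ d₁.support, v.c ≤ R₀.c := by
      intro v hv
      exact hdsup v (by rw [SimpleGraph.Walk.support_cons]; exact List.mem_cons_of_mem _ hv)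
    have hint₁ : R₀ ∉ d₁.support.dropLast := by
      intro hmem
      have hsne := d₁.support_ne_nil
      have hsplit := List.dropLast_append_getLast hsne
      rw [← hsplit] at hnodup
      refine List.disjoint_of_nodup_append hnodup hmem ?_
      rw [SimpleGraph.Walk.getLast_support]
      simp
    obtain ⟨hS₂ne, hS₂dir0, hov₂⟩ := adj_overlap h₂
    have hS₂mem : S₂ ∈ d₁.support := SimpleGraph.Walk.start_mem_support _
    have hS₂c : S₂.c ≤ R₀.c := hmax₁ S₂ hS₂mem
    have hS₂dir : S₂.d + 1 = R₀.c := by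
      rcases hS₂dir0 with hdd | hdd
      · exfalso; have := R₀.hcd; omega
      · exact hdd
    cases d₁ with
    | nil => simp at hlen3
    | @cons _ T _ h₃ d₂ =>
      have hd₂len : 1 ≤ d₂.length := by
        rw [SimpleGraph.Walk.length_cons] at hlen3; omega
      have hd₂nn : ¬d₂.Nil := by
        rw [SimpleGraph.Walk.not_nil_iff_lt_length]; omega
      obtain ⟨S₁, hS₁mem, hS₁adj, hEC⟩ := entryCol_last R₀ d₂.length d₂ rfl hd₂nn
      have hS₁memd₂ : S₁ ∈ d₂.support := (List.dropLast_sublist _).subset hS₁mem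
      have hS₂notin : S₂ ∉ d₂.support := by
        rw [SimpleGraph.Walk.support_cons] at hnodup
        exact (List.nodup_cons.mp hnodup).1
      have hS₁S₂ : S₁ ≠ S₂ := fun he => hS₂notin (he ▸ hS₁memd₂)
      have hS₁memd₁ : S₁ ∈ (SimpleGraph.Walk.cons h₃ d₂).support := by
        rw [SimpleGraph.Walk.support_cons]; exact List.mem_cons_of_mem _ hS₁memd₂
      have hS₁c : S₁.c ≤ R₀.c := hmax₁ S₁ hS₁memd₁
      obtain ⟨hS₁ne, hS₁dir0, hov₁⟩ := adj_overlap hS₁adj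
      have hS₁dir : S₁.d + 1 = R₀.c := by
        rcases hS₁dir0 with hdd | hdd
        · exact hdd
        · exfalso; have := R₀.hcd; omega
      have hS1cd := S₁.hcd
      have hS2cd := S₂.hcd
      have hR0cd := R₀.hcd
      -- the two neighbours live in the row just below R₀, with disjoint spans
      have hdisj : S₁.b < S₂.a ∨ S₂.b < S₁.a :=
        piece_row_disjoint hS₁S₂ (R₀.c - 1) (by omega) (by omega) (by omega) (by omega)
      have hS₁run := S₁.hrows S₁.d S₁.hcd le_rfl
      have hS₂run := S₂.hrows S₂.d S₂.hcd le_rfl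
      have hS₁ab : S₁.a ≤ S₁.b := hS₁run.1
      have hS₂ab : S₂.a ≤ S₂.b := hS₂run.1
      -- the gap pixel
      obtain ⟨g, hgP, hga, hgb, hgrow, hcase⟩ :
          ∃ g : Pix, g ∉ P ∧ R₀.a ≤ g.1 ∧ g.1 + 1 ≤ R₀.b ∧ R₀.c = g.2 + 1 ∧
            ((S₂.a ≥ g.1 + 1 ∧ S₁.b ≤ g.1 - 1) ∨ (S₁.a ≥ g.1 + 1 ∧ S₂.b ≤ g.1 - 1)) := by
        rcases hdisj with hlt | hlt
        · refine ⟨(S₁.b + 1, R₀.c - 1), ?_, by omega, ?_, by ring, Or.inl ⟨?_, by omega⟩⟩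
          · have hthis := hS₁run.2.2.2
            have h' : S₁.d = R₀.c - 1 := by omega
            rwa [h'] at hthis
          · -- strictness : S₁.b + 1 < S₂.a
            have hstrict : S₁.b + 1 < S₂.a := by
              by_contra hcon
              have he : S₁.b + 1 = S₂.a := by omega
              have hmem := hS₂run.2.1 S₂.a le_rfl hS₂ab
              have hnot := hS₁run.2.2.2
              rw [he] at hnot
              have : S₁.d = S₂.d := by omega
              rw [this] at hnot
              exact hnot hmem
            omega
          · have hstrict : S₁.b + 1 < S₂.a := by
              by_contra hcon
              have he : S₁.b + 1 = S₂.a := by omega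
              have hmem := hS₂run.2.1 S₂.a le_rfl hS₂ab
              have hnot := hS₁run.2.2.2
              rw [he] at hnot
              have : S₁.d = S₂.d := by omega
              rw [this] at hnot
              exact hnot hmem
            omega
        · refine ⟨(S₂.b + 1, R₀.c - 1), ?_, by omega, ?_, by ring, Or.inr ⟨?_, by omega⟩⟩
          · have hthis := hS₂run.2.2.2
            have h' : S₂.d = R₀.c - 1 := by omega
            rwa [h'] at hthis
          · have hstrict : S₂.b + 1 < S₁.a := by
              by_contra hcon
              have he : S₂.b + 1 = S₁.a := by omega
              have hmem := hS₁run.2.1 S₁.a le_rfl hS₁ab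
              have hnot := hS₂run.2.2.2
              rw [he] at hnot
              have : S₂.d = S₁.d := by omega
              rw [this] at hnot
              exact hnot hmem
            omega
          · have hstrict : S₂.b + 1 < S₁.a := by
              by_contra hcon
              have he : S₂.b + 1 = S₁.a := by omega
              have hmem := hS₁run.2.1 S₁.a le_rfl hS₁ab
              have hnot := hS₂run.2.2.2
              rw [he] at hnot
              have : S₂.d = S₁.d := by omega
              rw [this] at hnot
              exact hnot hmem
            omega
      -- build the loop through the cycle
      have hx₀a : R₀.a ≤ max R₀.a S₂.a := le_max_left _ _
      have hx₀b : max R₀.a S₂.a ≤ R₀.b := le_trans hov₂ (min_le_left _ _)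
      have hαS₂a : S₂.a ≤ max R₀.a S₂.a := le_max_right _ _
      have hαS₂b : max R₀.a S₂.a ≤ S₂.b := le_trans hov₂ (min_le_right _ _)
      set α := max R₀.a S₂.a with hαdef
      obtain ⟨hne, hhead, hlast, hchain, hmemP, hsum⟩ :=
        route_spec R₀ α g hga hgb hgrow hx₀a hx₀b (SimpleGraph.Walk.cons h₃ d₂).length
          (SimpleGraph.Walk.cons h₃ d₂) α S₂.d rfl hmax₁ hint₁ hαS₂a hαS₂b S₂.hcd le_rfl
          (fun hn => absurd hn SimpleGraph.Walk.not_nil_cons)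
      set rt := route R₀ α (SimpleGraph.Walk.cons h₃ d₂) α S₂.d with hrtdef
      have hβ : entryCol R₀ (SimpleGraph.Walk.cons h₃ d₂) α = max S₁.a R₀.a := by
        rw [entryCol]; exact hEC _
      have hβ₁ : S₁.a ≤ max S₁.a R₀.a := le_max_left _ _
      have hβ₂ : max S₁.a R₀.a ≤ S₁.b := le_trans hov₁ (min_le_left _ _)
      set β := max S₁.a R₀.a with hβdef
      -- properties of the closed loop `(α, R₀.c) :: rt`
      have hLchain : (((α, R₀.c) : Pix) :: rt).Chain' Adj4 := by
        refine List.isChain_cons.mpr ⟨?_, hchain⟩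
        intro y hy
        rw [List.head?_eq_head hne] at hy
        injection hy with hy
        rw [← hy, hhead]
        unfold Adj4; simp; omega
      have hLlast : (((α, R₀.c) : Pix) :: rt).getLast (by simp) = (α, R₀.c) := by
        rw [List.getLast_cons hne, hlast]
      have hLmem : ∀ p ∈ ((α, R₀.c) : Pix) :: rt, p ∈ P := by
        intro p hp
        rcases List.mem_cons.mp hp with rfl | hp
        · exact InPiece.memP (R := R₀) ⟨hx₀a, hx₀b, le_rfl, R₀.hcd⟩
        · exact hmemP p hp
      -- the upward crossing sum is ±1
      have hSU : SSum (crossU g) (((α, R₀.c) : Pix) :: rt) =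
          HU g (α, R₀.c) - HU g (β, R₀.c) := by
        rw [SSum_cons' _ _ _ hne, hhead]
        have hj : crossU g (α, R₀.c) (α, S₂.d) = 0 := by
          unfold crossU; split_ifs <;> omega
        rw [hj, hsum, hβ]
        ring
      have hSUval : SSum (crossU g) (((α, R₀.c) : Pix) :: rt) = 1 ∨
          SSum (crossU g) (((α, R₀.c) : Pix) :: rt) = -1 := by
        rcases hcase with ⟨hc1, hc2⟩ | ⟨hc1, hc2⟩
        · left; rw [hSU]; unfold HU; split_ifs <;> omega
        · right; rw [hSU]; unfold HU; split_ifs <;> omega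
      -- the full-line crossing sum vanishes, so the downward sum is ∓1
      have hF : SSum (crossF g) (((α, R₀.c) : Pix) :: rt) = 0 :=
        SSum_crossF_closed g _ rt hLchain hLlast
      have hsplit : SSum (crossF g) (((α, R₀.c) : Pix) :: rt) =
          SSum (fun x y => crossB g x y + crossU g x y) (((α, R₀.c) : Pix) :: rt) :=
        SSum_congr _ _ _ _ (fun x y hxy => cross_split g x y (chain'_of_zip _ hLchain x y hxy))
      have hadd := SSum_add (crossB g) (crossU g) (((α, R₀.c) : Pix) :: rt)
      -- but the winding number around the gap pixel must be 0, since the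
      -- complement is connected and unbounded
      obtain ⟨M0, hM0⟩ := (hfin.image Prod.fst).bddAbove
      have hfarpt : ((M0 + 1 : ℤ), g.2) ∉ P := by
        intro hmem
        have := hM0 (Set.mem_image_of_mem Prod.fst hmem)
        simp only [upperBounds, Set.mem_setOf_eq] at this
        omega
      have hpath := hholefree.2 g hgP ((M0 + 1 : ℤ), g.2) hfarpt
      have h0 : SSum (crossB g) (((α, R₀.c) : Pix) :: rt) =
          SSum (crossB ((M0 + 1 : ℤ), g.2)) (((α, R₀.c) : Pix) :: rt) :=
        W_path Pᶜ _ rt hLchain hLlast (fun p hp hpc => hpc (hLmem p hp)) hpath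
      have hfar0 : SSum (crossB ((M0 + 1 : ℤ), g.2)) (((α, R₀.c) : Pix) :: rt) = 0 := by
        apply W_far
        intro p hp
        have := hM0 (Set.mem_image_of_mem Prod.fst (hLmem p hp))
        show p.1 ≤ M0 + 1
        omega
      rcases hSUval with hv | hv <;> omega

end SlabAux

/-- Let `P` be a hole-free polyomino (finite, 4-connected, with 4-connected
complement).  Then the adjacency graph of the rectangles of the horizontal slab
decomposition of `P` is a tree. -/
theorem slab_adjacency_graph_isTree (P : Set Pix) (hfin : P.Finite)
    (hconn : Connected4 P) (hholefree : Connected4 Pᶜ) :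
    (SimpleGraph.fromRel (fun R R' : SlabPiece P => SlabAdj R R')).IsTree :=
  ⟨SlabAux.slab_connected hfin hconn, SlabAux.slab_acyclic hfin hholefree⟩
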